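/- Suppose m ≥ 3. Then every element x ∈ X is contained in exactly r_3 = (2^m − 4)/2! blocks of W_3, and the total number of blocks is |W_3| = (2^m − 2)(2^m − 4)/3!. -/

import Mathlib

open scoped Classical

noncomputable section

/-- `X = GF(2^m) \\ {0, 1}`. -/
def designX (m : ℕ) : Set (GaloisField 2 m) := {x | x ≠ 0 ∧ x ≠ 1}

/-- `W_k`: the collection of all `k`-element subsets `B` of `X` whose element-sum is `1`
and such that no nonempty proper subset of `B` has element-sum `1`. -/
def designW (m k : ℕ) : Set (Finset (GaloisField 2 m)) :=
  {B | (B : Set (GaloisField 2 m)) ⊆ designX m ∧ B.card = k ∧ B.sum id = 1 ∧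
    ∀ I ⊆ B, I.Nonempty → I ≠ B → I.sum id ≠ 1}

open Finset

private lemma gf_two_eq_zero (m : ℕ) : (2 : GaloisField 2 m) = 0 := by
  have : CharP (GaloisField 2 m) 2 := inferInstance
  exact CharTwo.two_eq_zero

private lemma mem_W3_iff {m : ℕ} (B : Finset (GaloisField 2 m)) :
    B ∈ designW m 3 ↔ (B : Set (GaloisField 2 m)) ⊆ designX m ∧ B.card = 3 ∧ B.sum id = 1 := by
  have htwo := gf_two_eq_zero m
  constructor
  · rintro ⟨h1, h2, h3, -⟩; exact ⟨h1, h2, h3⟩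
  · rintro ⟨h1, h2, h3⟩
    refine ⟨h1, h2, h3, ?_⟩
    intro I hIB hIne hInB hI1
    have hlt : I.card < 3 := h2 ▸ Finset.card_lt_card (hIB.ssubset_of_ne hInB)
    have hpos : 1 ≤ I.card := Finset.card_pos.mpr hIne
    have hsd : (B \ I).sum id + I.sum id = B.sum id := Finset.sum_sdiff hIB
    rw [hI1, h3] at hsd
    have hzero : (B \ I).sum id = 0 := by
      have h' : (B \ I).sum id + 1 = 0 + 1 := by rw [hsd, zero_add]
      exact add_right_cancel h'
    have hcards : (B \ I).card = 3 - I.card := by rw [Finset.card_sdiff_of_subset hIB, h2]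
    interval_cases h : I.card
    · -- B \ I has 2 elements c, d with c + d = 0, so c = d, contradiction
      have h2' : (B \ I).card = 2 := by omega
      obtain ⟨c, d, hcd, hB⟩ := Finset.card_eq_two.mp h2'
      rw [hB, Finset.sum_pair hcd] at hzero
      simp only [id_eq] at hzero
      exact hcd (by linear_combination hzero - d * htwo)
    · -- B \ I has 1 element c with c = 0, but c ∈ X
      have h1' : (B \ I).card = 1 := by omega
      obtain ⟨c, hB⟩ := Finset.card_eq_one.mp h1'
      rw [hB, Finset.sum_singleton] at hzero
      have hc : c ∈ B := (Finset.mem_sdiff.mp (hB ▸ Finset.mem_singleton_self c)).1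
      exact (h1 hc).1 (by simpa using hzero)

theorem repetition_and_block_numbers_W3 (m : ℕ) (hm : 3 ≤ m) :
    (∀ x ∈ designX m, {B ∈ designW m 3 | x ∈ B}.ncard = (2 ^ m - 4) / Nat.factorial 2) ∧
    (designW m 3).ncard = (2 ^ m - 2) * (2 ^ m - 4) / Nat.factorial 3 := by
  haveI : Fintype (GaloisField 2 m) := Fintype.ofFinite _
  set F := GaloisField 2 m
  have htwo : (2 : F) = 0 := gf_two_eq_zero m
  have hcardF : Fintype.card F = 2 ^ m := by
    rw [← Nat.card_eq_fintype_card]; exact GaloisField.card 2 m (by omega)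
  set Wfin : Finset (Finset F) := Finset.univ.filter (· ∈ designW m 3) with hWfin
  have hWcoe : designW m 3 = ↑Wfin := by ext B; simp [hWfin]
  -- key repetition count
  have key : ∀ x ∈ designX m, (Wfin.filter (fun B => x ∈ B)).card * 2 = 2 ^ m - 4 := by
    rintro x ⟨hx0, hx1⟩
    have hy0 : (1 : F) + x ≠ 0 := fun h => hx1 (by linear_combination h - htwo)
    have hy1 : (1 : F) + x ≠ 1 := fun h => hx0 (by linear_combination h)
    have hyx : (1 : F) + x ≠ x := fun h => one_ne_zero (by linear_combination h)
    set A : Finset F := Finset.univ \ {0, 1, x, 1 + x} with hA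
    have hAcard : A.card = 2 ^ m - 4 := by
      rw [hA, Finset.card_sdiff_of_subset (Finset.subset_univ _), Finset.card_univ, hcardF]
      congr 1
      rw [Finset.card_insert_of_notMem (by simp [hx0.symm, hy0.symm, Ne.symm one_ne_zero]),
        Finset.card_insert_of_notMem (by simp [hx1.symm, hy1.symm]),
        Finset.card_insert_of_notMem (by simp [hyx.symm]), Finset.card_singleton]
    set f : F → Finset F := fun a => {x, a, x + a + 1} with hf
    have hmaps : ∀ a ∈ A, f a ∈ Wfin.filter (fun B => x ∈ B) := by
      intro a ha
      rw [hA] at ha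
      simp only [Finset.mem_sdiff, Finset.mem_insert, Finset.mem_singleton, Finset.mem_univ,
        true_and] at ha
      push_neg at ha
      obtain ⟨ha0, ha1, hax, hay⟩ := ha
      have hb0 : x + a + 1 ≠ 0 := fun h => hay (by linear_combination h - (x + 1) * htwo)
      have hb1 : x + a + 1 ≠ 1 := fun h => hax (by linear_combination h - x * htwo)
      have hxa : x ≠ a := fun h => hax h.symm
      have hxb : x ≠ x + a + 1 := fun h => ha1 (by linear_combination -h - htwo)
      have hab : a ≠ x + a + 1 := fun h => hx1 (by linear_combination -h - htwo)
      simp only [Finset.mem_filter, Finset.mem_univ, true_and, hWfin]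
      constructor
      · rw [mem_W3_iff]
        refine ⟨?_, ?_, ?_⟩
        · intro z hz
          simp only [hf, Finset.coe_insert, Set.mem_insert_iff, Finset.coe_singleton,
            Set.mem_singleton_iff] at hz
          rcases hz with rfl | rfl | rfl
          · exact ⟨hx0, hx1⟩
          · exact ⟨ha0, ha1⟩
          · exact ⟨hb0, hb1⟩
        · simp only [hf]
          rw [Finset.card_insert_of_notMem (by simp [hxa, hxb]),
            Finset.card_insert_of_notMem (by simp [hab]), Finset.card_singleton]
        · simp only [hf]
          rw [Finset.sum_insert (by simp [hxa, hxb]), Finset.sum_pair hab]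
          simp only [id_eq]
          linear_combination (x + a) * htwo
      · simp [hf]
    have hfibers : ∀ B ∈ Wfin.filter (fun B => x ∈ B),
        (A.filter (fun a => f a = B)).card = 2 := by
      intro B hB
      simp only [Finset.mem_filter, hWfin, Finset.mem_univ, true_and] at hB
      obtain ⟨hBW, hxB⟩ := hB
      rw [mem_W3_iff] at hBW
      obtain ⟨hBX, hB3, hBs⟩ := hBW
      have herase : (B.erase x).card = 2 := by rw [Finset.card_erase_of_mem hxB, hB3]
      obtain ⟨a, b, hab, hE⟩ := Finset.card_eq_two.mp herase
      have haE : a ∈ B.erase x := hE ▸ (by simp : a ∈ ({a, b} : Finset F))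
      have hbE : b ∈ B.erase x := hE ▸ (by simp : b ∈ ({a, b} : Finset F))
      have haB : a ∈ B := Finset.mem_of_mem_erase haE
      have hbB : b ∈ B := Finset.mem_of_mem_erase hbE
      have hax : a ≠ x := Finset.ne_of_mem_erase haE
      have hbx : b ≠ x := Finset.ne_of_mem_erase hbE
      have hBeq : B = insert x {a, b} := by rw [← hE, Finset.insert_erase hxB]
      have hsum : x + (a + b) = 1 := by
        rw [hBeq, Finset.sum_insert (by simp [hax.symm, hbx.symm]),
          Finset.sum_pair hab] at hBs
        simpa using hBs
      have hb_eq : x + a + 1 = b := by linear_combination hsum + (1 - b) * htwo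
      have ha_eq : x + b + 1 = a := by linear_combination hsum + (1 - a) * htwo
      have haA : a ∈ A := by
        obtain ⟨ha0, ha1⟩ := hBX haB
        rw [hA]
        simp only [Finset.mem_sdiff, Finset.mem_univ, true_and, Finset.mem_insert,
          Finset.mem_singleton]
        push_neg
        refine ⟨ha0, ha1, hax, fun h => (hBX hbB).1 ?_⟩
        linear_combination -hb_eq + h + (x + 1) * htwo
      have hbA : b ∈ A := by
        obtain ⟨hb0, hb1⟩ := hBX hbB
        rw [hA]
        simp only [Finset.mem_sdiff, Finset.mem_univ, true_and, Finset.mem_insert,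
          Finset.mem_singleton]
        push_neg
        refine ⟨hb0, hb1, hbx, fun h => (hBX haB).1 ?_⟩
        linear_combination -ha_eq + h + (x + 1) * htwo
      have hfa : f a = B := by
        simp only [hf]; rw [hb_eq, hBeq]
      have hfb : f b = B := by
        simp only [hf]; rw [ha_eq, hBeq]
        ext z; simp only [Finset.mem_insert, Finset.mem_singleton]; tauto
      have hfilter : A.filter (fun c => f c = B) = {a, b} := by
        ext c
        simp only [Finset.mem_filter, Finset.mem_insert, Finset.mem_singleton]
        constructor
        · rintro ⟨hcA, hfc⟩
          have hcB : c ∈ B := by rw [← hfc]; simp [hf]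
          have hcx : c ≠ x := by
            rw [hA] at hcA
            simp only [Finset.mem_sdiff, Finset.mem_insert, Finset.mem_singleton,
              Finset.mem_univ, true_and] at hcA
            push_neg at hcA
            exact hcA.2.2.1
          rw [hBeq] at hcB
          simp only [Finset.mem_insert, Finset.mem_singleton] at hcB
          tauto
        · rintro (rfl | rfl)
          · exact ⟨haA, hfa⟩
          · exact ⟨hbA, hfb⟩
      rw [hfilter, Finset.card_insert_of_notMem (by simp [hab]), Finset.card_singleton]
    have hsum := Finset.card_eq_sum_card_fiberwise hmaps
    rw [Finset.sum_congr rfl hfibers, Finset.sum_const, smul_eq_mul] at hsum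
    omega
  have hrep : ∀ x ∈ designX m, {B ∈ designW m 3 | x ∈ B}.ncard = (2 ^ m - 4) / 2 := by
    intro x hx
    have hset : {B ∈ designW m 3 | x ∈ B} = ↑(Wfin.filter (fun B => x ∈ B)) := by
      ext B; simp [hWfin]
    rw [hset, Set.ncard_coe_finset]
    have := key x hx
    omega
  constructor
  · simpa [Nat.factorial] using hrep
  · set Xfin : Finset F := Finset.univ.filter (· ∈ designX m) with hXfin
    have hXcard : Xfin.card = 2 ^ m - 2 := by
      have hX' : Xfin = Finset.univ \ {0, 1} := by
        ext z; rw [hXfin, Finset.mem_filter]; simp [designX, and_comm]; exact Iff.rfl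
      rw [hX', Finset.card_sdiff_of_subset (Finset.subset_univ _), Finset.card_univ, hcardF]
      congr 1
      rw [Finset.card_insert_of_notMem (by simp), Finset.card_singleton]
    have hdouble : ∑ B ∈ Wfin, B.card = ∑ x ∈ Xfin, (Wfin.filter (fun B => x ∈ B)).card := by
      have hre : ∀ B ∈ Wfin, B.card = (Xfin.filter (fun x => x ∈ B)).card := by
        intro B hB
        simp only [hWfin, Finset.mem_filter, Finset.mem_univ, true_and] at hB
        congr 1
        ext z
        simp only [Finset.mem_filter, hXfin, Finset.mem_univ, true_and]
        exact ⟨fun h => ⟨hB.1 h, h⟩, fun h => h.2⟩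
      rw [Finset.sum_congr rfl hre]
      simp only [Finset.card_filter]
      exact Finset.sum_comm
    have hBcard : ∀ B ∈ Wfin, B.card = 3 := by
      intro B hB
      simp only [hWfin, Finset.mem_filter, Finset.mem_univ, true_and] at hB
      exact hB.2.1
    have hleft : ∑ B ∈ Wfin, B.card = 3 * Wfin.card := by
      rw [Finset.sum_congr rfl hBcard, Finset.sum_const, smul_eq_mul, mul_comm]
    have hright : ∑ x ∈ Xfin, (Wfin.filter (fun B => x ∈ B)).card * 2
        = (2 ^ m - 2) * (2 ^ m - 4) := by
      rw [Finset.sum_congr rfl (fun x hx => key x (by simpa [hXfin] using hx)),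
        Finset.sum_const, smul_eq_mul, hXcard]
    have h6 : 6 * Wfin.card = (2 ^ m - 2) * (2 ^ m - 4) := by
      rw [← Finset.sum_mul, ← hdouble, hleft] at hright
      omega
    rw [hWcoe, Set.ncard_coe_finset, ← h6, show Nat.factorial 3 = 6 from rfl,
      Nat.mul_div_cancel_left _ (by norm_num)]
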